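/- For a vector d = (d_1,…,d_n) ∈ ℤ^n, there exists a simple digraph D on vertex set [n] with net-degree sequence ds(D) = d if and only if d_1 + ⋯ + d_n = 0 and Σ_{i∈I} d_i ≤ |I|·(n − |I|) for every nonempty proper subset I ⊊ [n]. -/

import Mathlib

/-- A simple digraph on vertex set `Fin n`: a set of arcs (ordered pairs of distinct
vertices) such that for each unordered pair at most one orientation is present. -/
structure Digraph' (n : ℕ) where
  arcs : Finset (Fin n × Fin n)
  oneWay : ∀ u v : Fin n, (u, v) ∈ arcs → (v, u) ∉ arcs

/-- The net-degree of a node `v`: in-degree minus out-degree. -/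
def Digraph'.netDeg {n : ℕ} (D : Digraph' n) (v : Fin n) : ℤ :=
  ((D.arcs.filter fun p => p.2 = v).card : ℤ) - ((D.arcs.filter fun p => p.1 = v).card : ℤ)

open Finset

variable {n : ℕ}

def GoodMat (a : Fin n → Fin n → ℤ) : Prop :=
  (∀ x y, a x y = - a y x) ∧ (∀ x y, a x y ≤ 1)

def colSum (a : Fin n → Fin n → ℤ) (v : Fin n) : ℤ := ∑ x, a x v

lemma skew_sum_zero {a : Fin n → Fin n → ℤ} (hs : ∀ x y, a x y = - a y x)
    (S : Finset (Fin n)) : ∑ x ∈ S, ∑ y ∈ S, a x y = 0 := by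
  have h2 : ∑ x ∈ S, ∑ y ∈ S, a x y = - ∑ x ∈ S, ∑ y ∈ S, a y x := by
    rw [← Finset.sum_neg_distrib]
    refine Finset.sum_congr rfl fun x _ => ?_
    rw [← Finset.sum_neg_distrib]
    exact Finset.sum_congr rfl fun y _ => hs x y
  have h1 : ∑ x ∈ S, ∑ y ∈ S, a y x = ∑ x ∈ S, ∑ y ∈ S, a x y := Finset.sum_comm
  linarith

/-- push one unit of flow along `u → v`. -/
def push (a : Fin n → Fin n → ℤ) (u v : Fin n) : Fin n → Fin n → ℤ :=
  fun x y => if x = u ∧ y = v then a x y + 1 else if x = v ∧ y = u then a x y - 1 else a x y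

lemma push_good {a : Fin n → Fin n → ℤ} (ha : GoodMat a) {u v : Fin n}
    (huv : u ≠ v) (hle : a u v ≤ 0) : GoodMat (push a u v) := by
  obtain ⟨hs, hb⟩ := ha
  constructor
  · intro x y
    simp only [push]
    split_ifs <;>
      first
        | (rw [hs x y]; ring1)
        | tauto
        | (exfalso; clear hs hb hle; simp_all)
  · intro x y
    have := hb x y
    have h2 := hs u v
    have h3 := hb v u
    simp only [push]
    split_ifs with h1 h4
    · obtain ⟨rfl, rfl⟩ := h1; omega
    · obtain ⟨rfl, rfl⟩ := h4; omega
    · exact this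

lemma push_colSum {a : Fin n → Fin n → ℤ} {u v : Fin n} (huv : u ≠ v) (y : Fin n) :
    colSum (push a u v) y =
      colSum a y + (if y = v then 1 else 0) - (if y = u then 1 else 0) := by
  have hpt : ∀ x, push a u v x y =
      a x y + (if x = u ∧ y = v then 1 else 0) - (if x = v ∧ y = u then 1 else 0) := by
    intro x
    simp only [push]
    split_ifs <;> omega
  simp only [colSum, hpt, Finset.sum_sub_distrib, Finset.sum_add_distrib]
  congr 1
  · congr 1
    by_cases hy : y = v <;> simp [hy]
  · by_cases hy : y = u <;> simp [hy]

lemma chain_congr {α : Type*} {r r' : α → α → Prop} :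
    ∀ (l : List α) (x : α), List.Chain r x l →
      (∀ a b, a ∈ x :: l → b ∈ l → r a b → r' a b) → List.Chain r' x l
  | [], _, _, _ => List.Chain.nil
  | b :: l, x, h, himp => by
    obtain ⟨hr, hch⟩ := List.isChain_cons_cons.1 h
    exact List.Chain.cons (himp x b (by simp) (by simp) hr)
      (chain_congr l b hch (fun a c ha hc hr => himp a c (by simp [ha]) (by simp [hc]) hr))

/-- Augmenting path lemma: flow can be pushed along a residual chain. -/
lemma aug : ∀ (m : ℕ) (a : Fin n → Fin n → ℤ) (u v : Fin n) (l : List (Fin n)),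
    GoodMat a → l.length ≤ m → List.Chain (fun x y => a x y ≤ 0) u l →
    (u :: l).getLast? = some v →
    ∃ b, GoodMat b ∧ ∀ y, colSum b y =
      colSum a y + (if y = v then 1 else 0) - (if y = u then 1 else 0) := by
  intro m
  induction m with
  | zero =>
    intro a u v l ha hl _ hlast
    rw [List.length_eq_zero_iff.1 (Nat.le_zero.1 hl)] at hlast
    simp only [List.getLast?_singleton, Option.some.injEq] at hlast
    subst hlast
    exact ⟨a, ha, fun y => by simp⟩
  | succ m ih =>
    intro a u v l ha hl hch hlast
    match l with
    | [] =>
      simp only [List.getLast?_singleton, Option.some.injEq] at hlast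
      subst hlast
      exact ⟨a, ha, fun y => by simp⟩
    | w :: l' =>
      by_cases hu : u ∈ w :: l'
      · -- shortcut: restart from the later occurrence of u
        obtain ⟨l1, l2, hsplit⟩ := List.append_of_mem hu
        have hch2 : List.Chain (fun x y => a x y ≤ 0) u l2 :=
          ((List.isChain_cons_split).1 (hsplit ▸ hch)).2
        have hlast2 : (u :: l2).getLast? = some v := by
          have : u :: w :: l' = (u :: l1) ++ (u :: l2) := by simp [hsplit]
          rw [this, List.getLast?_append] at hlast
          simpa [List.getLast?_isSome] using hlast
        have hlen : l2.length ≤ m := by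
          have h1 : l'.length + 1 = l1.length + (l2.length + 1) := by
            simpa using congrArg List.length hsplit
          have h2 : l'.length + 1 ≤ m + 1 := by simpa using hl
          omega
        exact ih a u v l2 ha hlen hch2 hlast2
      · -- push along the first edge u → w, then recurse
        have huw : u ≠ w := fun h => hu (h ▸ List.mem_cons_self)
        have hle : a u w ≤ 0 := (List.chain_cons.1 hch).1
        have hgood : GoodMat (push a u w) := push_good ha huw hle
        have hch' : List.Chain (fun x y => push a u w x y ≤ 0) w l' := by
          refine chain_congr l' w (List.chain_cons.1 hch).2 (fun x y hx hy hr => ?_)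
          have hxu : x ≠ u := fun h => hu (h ▸ hx)
          have hyu : y ≠ u := fun h => hu (h ▸ List.mem_cons_of_mem w hy)
          simpa [push, hxu, hyu] using hr
        have hlast' : (w :: l').getLast? = some v := by
          have : u :: w :: l' = [u] ++ (w :: l') := rfl
          rw [this, List.getLast?_append] at hlast
          simpa [List.getLast?_isSome, List.getLast?_cons] using hlast
        obtain ⟨b, hb, hcol⟩ := ih (push a u w) w v l' hgood (by simpa using hl) hch' hlast'
        refine ⟨b, hb, fun y => ?_⟩
        have h1 := hcol y
        have h2 := push_colSum (a := a) huw y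
        rw [h2] at h1
        have hvu : v ≠ u := by
          have hv : v ∈ w :: l' := by
            obtain ⟨hne, rfl⟩ := List.mem_getLast?_eq_getLast (l := w :: l') (x := v) hlast'
            exact List.getLast_mem hne
          exact fun h => hu (h ▸ hv)
        rw [h1]
        split_ifs <;> omega

lemma exists_goodmat : ∀ (N : ℕ) (d : Fin n → ℤ), (∑ i, (d i).natAbs) ≤ N →
    (∑ i, d i = 0) →
    (∀ I : Finset (Fin n), I.Nonempty → I ≠ Finset.univ →
        ∑ i ∈ I, d i ≤ (I.card : ℤ) * ((n : ℤ) - I.card)) →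
    ∃ a, GoodMat a ∧ ∀ v, colSum a v = d v := by
  intro N
  induction N with
  | zero =>
    intro d hN _ _
    have hz : ∀ i ∈ Finset.univ, (d i).natAbs = 0 := by
      intro i hi
      have : ∑ i, (d i).natAbs = 0 := Nat.le_zero.1 hN
      exact (Finset.sum_eq_zero_iff.1 this) i hi
    refine ⟨fun _ _ => 0, ⟨fun x y => by ring, fun x y => by norm_num⟩, fun v => ?_⟩
    have := hz v (Finset.mem_univ v)
    simp only [colSum, Finset.sum_const_zero]
    omega
  | succ N ih =>
    intro d hN h0 hI
    by_cases hz : ∀ i, d i = 0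
    · refine ⟨fun _ _ => 0, ⟨fun x y => by ring, fun x y => by norm_num⟩, fun v => ?_⟩
      simp [colSum, hz v]
    obtain ⟨i₀, hi₀⟩ := not_forall.1 hz
    have hn : (Finset.univ : Finset (Fin n)).Nonempty := ⟨i₀, Finset.mem_univ _⟩
    obtain ⟨v, -, hvmax⟩ := Finset.exists_max_image Finset.univ d hn
    have hdv : 0 < d v := by
      by_contra h
      push_neg at h
      have hle : ∀ i ∈ Finset.univ, d i ≤ 0 := fun i _ =>
        le_trans (hvmax i (Finset.mem_univ i)) h
      exact hi₀ ((Finset.sum_eq_zero_iff_of_nonpos hle).1 h0 i₀ (Finset.mem_univ i₀))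
    have hu : ∃ u, d u < 0 := by
      by_contra h
      push_neg at h
      have := (Finset.sum_eq_zero_iff_of_nonneg (fun i _ => h i)).1 h0 v (Finset.mem_univ v)
      omega
    obtain ⟨u, hdu⟩ := hu
    have huv : u ≠ v := by intro h; rw [h] at hdu; omega
    set d' : Fin n → ℤ :=
      fun i => d i + (if i = u then 1 else 0) - (if i = v then 1 else 0) with hd'
    have hsum' : ∑ i, d' i = 0 := by
      simp only [hd', Finset.sum_sub_distrib, Finset.sum_add_distrib,
        Finset.sum_ite_eq' Finset.univ, Finset.mem_univ, if_true, h0]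
      ring
    have hmeas : ∑ i, (d' i).natAbs ≤ N := by
      have hlt : ∑ i, (d' i).natAbs < ∑ i, (d i).natAbs := by
        apply Finset.sum_lt_sum
        · intro i _
          simp only [hd']
          split_ifs with h1 h2 h3 <;> subst_vars <;> omega
        · refine ⟨v, Finset.mem_univ v, ?_⟩
          have hval : d' v = d v - 1 := by simp [hd', Ne.symm huv]
          rw [hval]
          omega
      omega
    have hI' : ∀ I : Finset (Fin n), I.Nonempty → I ≠ Finset.univ →
        ∑ i ∈ I, d' i ≤ (I.card : ℤ) * ((n : ℤ) - I.card) := by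
      intro I hne hproper
      have hsplit : ∑ i ∈ I, d' i =
          ∑ i ∈ I, d i + (if u ∈ I then 1 else 0) - (if v ∈ I then 1 else 0) := by
        simp [hd', Finset.sum_add_distrib, Finset.sum_sub_distrib, Finset.sum_ite_eq']
      have hback := hI I hne hproper
      by_cases hvI : v ∈ I
      · rw [hsplit]; split_ifs <;> omega
      · rw [hsplit]
        have hstrict : ∑ i ∈ I, d i < (I.card : ℤ) * ((n : ℤ) - I.card) := by
          by_contra hge
          push_neg at hge
          have heq : ∑ i ∈ I, d i = (I.card : ℤ) * ((n : ℤ) - I.card) :=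
            le_antisymm hback hge
          set K : ℤ := (I.card : ℤ) with hK
          have hKpos : 0 < K := by rw [hK]; exact_mod_cast Finset.card_pos.2 hne
          have hKlt : K < n := by
            have h1 : I.card < (Finset.univ : Finset (Fin n)).card :=
              Finset.card_lt_card (Finset.ssubset_univ_iff.2 hproper)
            have h2 : (Finset.univ : Finset (Fin n)).card = n := by simp
            rw [h2] at h1
            rw [hK]
            exact_mod_cast h1
          have hex : ∃ i ∈ I, ((n : ℤ) - K) ≤ d i := by
            apply Finset.exists_le_of_sum_le hne
            rw [heq, Finset.sum_const, nsmul_eq_mul]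
          obtain ⟨i, hiI, hile⟩ := hex
          have hdvge : (n : ℤ) - K ≤ d v := le_trans hile (hvmax i (Finset.mem_univ i))
          set J := insert v I with hJ
          have hJcard : (J.card : ℤ) = K + 1 := by
            rw [hJ, Finset.card_insert_of_notMem hvI]; push_cast; ring
          have hJsum : ∑ i ∈ J, d i = d v + ∑ i ∈ I, d i := Finset.sum_insert hvI
          by_cases hJuniv : J = Finset.univ
          · have hz0 : ∑ i ∈ J, d i = 0 := by rw [hJuniv]; exact h0
            nlinarith [hKpos, hKlt, heq, hJsum, hz0, hdv]
          · have hle := hI J ⟨v, Finset.mem_insert_self v I⟩ hJuniv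
            rw [hJsum, heq, hJcard] at hle
            nlinarith [hdvge, hKpos]
        split_ifs <;> omega
    obtain ⟨a, hga, hca⟩ := ih d' hmeas hsum' hI'
    classical
    by_cases hreach : Relation.ReflTransGen (fun x y => a x y ≤ 0) u v
    · obtain ⟨l, hch, hlast⟩ := List.exists_isChain_cons_of_relationReflTransGen hreach
      have hlast? : (u :: l).getLast? = some v := by
        rw [List.getLast?_eq_getLast_of_ne_nil (by simp), hlast]
      obtain ⟨b, hgb, hcb⟩ := aug l.length a u v l hga le_rfl hch hlast?
      refine ⟨b, hgb, fun y => ?_⟩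
      rw [hcb y, hca y]
      simp only [hd']
      split_ifs <;> omega
    · exfalso
      set r : Fin n → Fin n → Prop := fun x y => a x y ≤ 0 with hr
      set S : Finset (Fin n) :=
        Finset.univ.filter (fun x => Relation.ReflTransGen r u x) with hS
      have huS : u ∈ S := Finset.mem_filter.2 ⟨Finset.mem_univ u, Relation.ReflTransGen.refl⟩
      have hvS : v ∉ S := fun h => hreach (Finset.mem_filter.1 h).2
      set I := Sᶜ with hIdef
      have hvI : v ∈ I := Finset.mem_compl.2 hvS
      have huI : u ∉ I := fun h => (Finset.mem_compl.1 h) huS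
      have hIne : I.Nonempty := ⟨v, hvI⟩
      have hIproper : I ≠ Finset.univ := fun h => huI (h ▸ Finset.mem_univ u)
      have hIc : Iᶜ = S := by rw [hIdef, compl_compl]
      have hfull : ∀ x ∈ S, ∀ y ∈ I, a x y = 1 := by
        intro x hx y hy
        have hxr : Relation.ReflTransGen r u x := (Finset.mem_filter.1 hx).2
        have h1 : ¬ a x y ≤ 0 := fun hle =>
          (Finset.mem_compl.1 hy) (Finset.mem_filter.2 ⟨Finset.mem_univ y, hxr.tail hle⟩)
        have h2 := hga.2 x y
        omega
      have hsum_I : ∑ y ∈ I, d' y = (I.card : ℤ) * S.card := by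
        have e1 : ∀ y ∈ I, d' y = ∑ x ∈ I, a x y + ∑ x ∈ S, a x y := by
          intro y _
          rw [← hca y, colSum, ← Finset.sum_add_sum_compl I (fun x => a x y), hIc]
        rw [Finset.sum_congr rfl e1, Finset.sum_add_distrib]
        have e2 : ∑ y ∈ I, ∑ x ∈ I, a x y = 0 := by
          rw [Finset.sum_comm]
          exact skew_sum_zero hga.1 I
        have e3 : ∑ y ∈ I, ∑ x ∈ S, a x y = (I.card : ℤ) * S.card := by
          have : ∀ y ∈ I, ∑ x ∈ S, a x y = (S.card : ℤ) := by
            intro y hy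
            rw [Finset.sum_congr rfl (fun x hx => hfull x hx y hy), Finset.sum_const,
              nsmul_eq_mul, mul_one]
          rw [Finset.sum_congr rfl this, Finset.sum_const, nsmul_eq_mul]
        rw [e2, e3, zero_add]
      have hScard : (S.card : ℤ) = (n : ℤ) - I.card := by
        have := Finset.card_add_card_compl S
        rw [← hIdef] at this
        have h2 : Fintype.card (Fin n) = n := by simp
        rw [h2] at this
        push_cast [← this]
        ring
      have hsplitI : ∑ i ∈ I, d i = ∑ i ∈ I, d' i + 1 := by
        have : ∑ i ∈ I, d' i =
            ∑ i ∈ I, d i + (if u ∈ I then 1 else 0) - (if v ∈ I then 1 else 0) := by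
          simp [hd', Finset.sum_add_distrib, Finset.sum_sub_distrib, Finset.sum_ite_eq']
        rw [this, if_neg huI, if_pos hvI]
        ring
      have hfin := hI I hIne hIproper
      rw [hsplitI, hsum_I, hScard] at hfin
      omega

lemma card_snd (arcs : Finset (Fin n × Fin n)) (v : Fin n) :
    (arcs.filter fun p => p.2 = v).card
      = (Finset.univ.filter fun x => (x, v) ∈ arcs).card := by
  apply Finset.card_bij (fun p _ => p.1)
  · rintro ⟨x, y⟩ hp
    simp only [Finset.mem_filter] at hp ⊢
    obtain ⟨h1, h2⟩ := hp
    subst h2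
    exact ⟨Finset.mem_univ x, h1⟩
  · rintro ⟨x, y⟩ hp ⟨x', y'⟩ hq h
    simp only [Finset.mem_filter] at hp hq
    simp only at h
    simp [h, hp.2, hq.2]
  · intro x hx
    simp only [Finset.mem_filter] at hx
    exact ⟨(x, v), Finset.mem_filter.2 ⟨hx.2, rfl⟩, rfl⟩

lemma card_fst (arcs : Finset (Fin n × Fin n)) (v : Fin n) :
    (arcs.filter fun p => p.1 = v).card
      = (Finset.univ.filter fun x => (v, x) ∈ arcs).card := by
  apply Finset.card_bij (fun p _ => p.2)
  · rintro ⟨x, y⟩ hp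
    simp only [Finset.mem_filter] at hp ⊢
    obtain ⟨h1, h2⟩ := hp
    subst h2
    exact ⟨Finset.mem_univ y, h1⟩
  · rintro ⟨x, y⟩ hp ⟨x', y'⟩ hq h
    simp only [Finset.mem_filter] at hp hq
    simp only at h
    simp [h, hp.2, hq.2]
  · intro x hx
    simp only [Finset.mem_filter] at hx
    exact ⟨(v, x), Finset.mem_filter.2 ⟨hx.2, rfl⟩, rfl⟩

lemma sum_pm (f : Fin n → ℤ) (h1 : ∀ x, -1 ≤ f x) (h2 : ∀ x, f x ≤ 1) :
    ∑ x, f x = ((Finset.univ.filter fun x => f x = 1).card : ℤ)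
      - ((Finset.univ.filter fun x => f x = -1).card : ℤ) := by
  have key : ∀ x, f x = (if f x = 1 then (1 : ℤ) else 0) - (if f x = -1 then 1 else 0) := by
    intro x
    have := h1 x
    have := h2 x
    split_ifs <;> omega
  rw [Finset.sum_congr rfl (fun x _ => key x), Finset.sum_sub_distrib,
    Finset.sum_boole, Finset.sum_boole]

/-- matrix associated to a digraph -/
def matOf (D : Digraph' n) : Fin n → Fin n → ℤ :=
  fun x y => (if (x, y) ∈ D.arcs then 1 else 0) - (if (y, x) ∈ D.arcs then 1 else 0)

lemma matOf_good (D : Digraph' n) : GoodMat (matOf D) :=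
  ⟨fun x y => by simp only [matOf]; ring,
   fun x y => by simp only [matOf]; split_ifs <;> omega⟩

lemma colSum_matOf (D : Digraph' n) (v : Fin n) : colSum (matOf D) v = D.netDeg v := by
  simp only [colSum, matOf, Finset.sum_sub_distrib, Finset.sum_boole, Digraph'.netDeg,
    card_snd D.arcs v, card_fst D.arcs v]

/-- digraph associated to a good matrix -/
def digraphOf (a : Fin n → Fin n → ℤ) (ha : GoodMat a) : Digraph' n where
  arcs := Finset.univ.filter fun p => a p.1 p.2 = 1
  oneWay := by
    intro u v h1 h2
    simp only [Finset.mem_filter] at h1 h2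
    have := ha.1 u v
    omega

lemma netDeg_digraphOf (a : Fin n → Fin n → ℤ) (ha : GoodMat a) (v : Fin n) :
    (digraphOf a ha).netDeg v = colSum a v := by
  have hlb : ∀ x y, -1 ≤ a x y := by
    intro x y
    have h1 := ha.1 x y
    have h2 := ha.2 y x
    omega
  have hin : ((digraphOf a ha).arcs.filter fun p => p.2 = v).card
      = (Finset.univ.filter fun x => a x v = 1).card := by
    rw [card_snd]
    congr 1
    apply Finset.filter_congr
    intro x _
    simp [digraphOf]
  have hout : ((digraphOf a ha).arcs.filter fun p => p.1 = v).card
      = (Finset.univ.filter fun x => a x v = -1).card := by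
    rw [card_fst]
    congr 1
    apply Finset.filter_congr
    intro x _
    have hs := ha.1 v x
    simp only [digraphOf, Finset.mem_filter, Finset.mem_univ, true_and]
    constructor
    · intro h; omega
    · intro h; omega
  rw [Digraph'.netDeg, hin, hout, colSum,
    sum_pm (fun x => a x v) (fun x => hlb x v) (fun x => ha.2 x v)]

theorem netDegree_sequence_digraph_iff (n : ℕ) (d : Fin n → ℤ) :
    (∃ D : Digraph' n, D.netDeg = d) ↔
      (∑ i, d i = 0 ∧
        ∀ I : Finset (Fin n), I.Nonempty → I ≠ Finset.univ →
          ∑ i ∈ I, d i ≤ (I.card : ℤ) * ((n : ℤ) - I.card)) := by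
  constructor
  · rintro ⟨D, rfl⟩
    have hca : ∀ v, colSum (matOf D) v = D.netDeg v := colSum_matOf D
    obtain ⟨hs, hb⟩ := matOf_good D
    constructor
    · rw [← Finset.sum_congr rfl (fun v _ => hca v)]
      show ∑ v, ∑ x, matOf D x v = 0
      rw [Finset.sum_comm]
      exact skew_sum_zero hs Finset.univ
    · intro I hne hproper
      have e1 : ∀ y ∈ I, D.netDeg y = ∑ x ∈ I, matOf D x y + ∑ x ∈ Iᶜ, matOf D x y := by
        intro y _
        rw [← hca y, colSum, ← Finset.sum_add_sum_compl I (fun x => matOf D x y)]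
      rw [Finset.sum_congr rfl e1, Finset.sum_add_distrib]
      have e2 : ∑ y ∈ I, ∑ x ∈ I, matOf D x y = 0 := by
        rw [Finset.sum_comm]
        exact skew_sum_zero hs I
      have e3 : ∑ y ∈ I, ∑ x ∈ Iᶜ, matOf D x y ≤ (I.card : ℤ) * ((n : ℤ) - I.card) := by
        have hcc : ((Iᶜ.card : ℤ)) = (n : ℤ) - I.card := by
          have := Finset.card_add_card_compl I
          have h2 : Fintype.card (Fin n) = n := by simp
          rw [h2] at this
          push_cast [← this]
          ring
        calc ∑ y ∈ I, ∑ x ∈ Iᶜ, matOf D x y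
            ≤ ∑ y ∈ I, ∑ x ∈ Iᶜ, (1 : ℤ) :=
              Finset.sum_le_sum (fun y _ => Finset.sum_le_sum (fun x _ => hb x y))
          _ = (I.card : ℤ) * Iᶜ.card := by
              simp [Finset.sum_const, nsmul_eq_mul, mul_comm]
          _ = (I.card : ℤ) * ((n : ℤ) - I.card) := by rw [hcc]
      omega
  · rintro ⟨h0, hI⟩
    obtain ⟨a, hga, hca⟩ := exists_goodmat (∑ i, (d i).natAbs) d le_rfl h0 hI
    refine ⟨digraphOf a hga, funext fun v => ?_⟩
    rw [netDeg_digraphOf a hga v, hca v]
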